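/- Let 0 ≤ zmin < zmax. Let x₁, x₂, y₁, y₂ ≥ 0 be reals and x₃, y₃ : [zmin, zmax] → ℝ be nonnegative integrable functions, and set x̂ := x₁ + x₂ + ∫_{zmin}^{zmax} x₃(u) du and ŷ := y₁ + y₂ + ∫_{zmin}^{zmax} y₃(u) du. If x̂ > 0 and ŷ > 0, then | x₁ x₂ / x̂² − y₁ y₂ / ŷ² | ≤ (3/ŷ) · ( |x₁ − y₁| + |x₂ − y₂| + ∫_{zmin}^{zmax} |x₃(u) − y₃(u)| du ). -/

import Mathlib

open Set MeasureTheory intervalIntegral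

private lemma frac_lip (X Y u v : ℝ) (hX : 0 < X) (hY : 0 < Y)
    (hu : 0 ≤ u) (huX : u ≤ X) (hv : 0 ≤ v) :
    |u / X - v / Y| ≤ (|X - Y| + |u - v|) / Y := by
  have h : u / X - v / Y = (u * (Y - X) + X * (u - v)) / (X * Y) := by
    field_simp; ring
  rw [h, abs_div, abs_of_pos (mul_pos hX hY), div_le_div_iff₀ (mul_pos hX hY) hY]
  have h1 : |u * (Y - X) + X * (u - v)| ≤ u * |X - Y| + X * |u - v| := by
    calc |u * (Y - X) + X * (u - v)| ≤ |u * (Y - X)| + |X * (u - v)| := abs_add_le _ _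
    _ = u * |Y - X| + X * |u - v| := by
        rw [abs_mul, abs_mul, abs_of_nonneg hu, abs_of_pos hX]
    _ = u * |X - Y| + X * |u - v| := by rw [abs_sub_comm]
  nlinarith [mul_nonneg (mul_nonneg hY.le (abs_nonneg (X - Y))) (sub_nonneg.2 huX),
    abs_nonneg (u - v)]

private lemma alg_key (x₁ x₂ y₁ y₂ X Y : ℝ) (hX : 0 < X) (hY : 0 < Y)
    (hx₁ : 0 ≤ x₁) (hx₂ : 0 ≤ x₂) (hy₁ : 0 ≤ y₁) (hy₂ : 0 ≤ y₂)
    (hx₁X : x₁ ≤ X) (hx₂X : x₂ ≤ X) (hy₁Y : y₁ ≤ Y) (hy₂Y : y₂ ≤ Y) :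
    |x₁ * x₂ / X ^ 2 - y₁ * y₂ / Y ^ 2|
      ≤ (2 * |X - Y| + |x₁ - y₁| + |x₂ - y₂|) / Y := by
  have hid : x₁ * x₂ / X ^ 2 - y₁ * y₂ / Y ^ 2
      = (x₂ / X) * (x₁ / X - y₁ / Y) + (y₁ / Y) * (x₂ / X - y₂ / Y) := by
    field_simp; ring
  have h2X : x₂ / X ≤ 1 := (div_le_one hX).2 hx₂X
  have h1Y : y₁ / Y ≤ 1 := (div_le_one hY).2 hy₁Y
  have hA := frac_lip X Y x₁ y₁ hX hY hx₁ hx₁X hy₁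
  have hB := frac_lip X Y x₂ y₂ hX hY hx₂ hx₂X hy₂
  calc |x₁ * x₂ / X ^ 2 - y₁ * y₂ / Y ^ 2|
      ≤ |(x₂ / X) * (x₁ / X - y₁ / Y)| + |(y₁ / Y) * (x₂ / X - y₂ / Y)| := by
        rw [hid]; exact abs_add_le _ _
    _ = (x₂ / X) * |x₁ / X - y₁ / Y| + (y₁ / Y) * |x₂ / X - y₂ / Y| := by
        rw [abs_mul, abs_mul, abs_of_nonneg (div_nonneg hx₂ hX.le),
          abs_of_nonneg (div_nonneg hy₁ hY.le)]
    _ ≤ 1 * ((|X - Y| + |x₁ - y₁|) / Y) + 1 * ((|X - Y| + |x₂ - y₂|) / Y) := by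
        gcongr <;> first | exact div_nonneg hx₂ hX.le | exact div_nonneg hy₁ hY.le
    _ = (2 * |X - Y| + |x₁ - y₁| + |x₂ - y₂|) / Y := by ring

theorem stmt4 (zmin zmax : ℝ) (hzmin : 0 ≤ zmin) (hzz : zmin < zmax)
    (x₁ x₂ y₁ y₂ : ℝ) (hx₁ : 0 ≤ x₁) (hx₂ : 0 ≤ x₂) (hy₁ : 0 ≤ y₁) (hy₂ : 0 ≤ y₂)
    (x₃ y₃ : ℝ → ℝ)
    (hx₃ : ∀ u ∈ Icc zmin zmax, 0 ≤ x₃ u) (hy₃ : ∀ u ∈ Icc zmin zmax, 0 ≤ y₃ u)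
    (hx₃i : IntegrableOn x₃ (Icc zmin zmax)) (hy₃i : IntegrableOn y₃ (Icc zmin zmax))
    (hxhat : 0 < x₁ + x₂ + ∫ u in zmin..zmax, x₃ u)
    (hyhat : 0 < y₁ + y₂ + ∫ u in zmin..zmax, y₃ u) :
    |x₁ * x₂ / (x₁ + x₂ + ∫ u in zmin..zmax, x₃ u) ^ 2
        - y₁ * y₂ / (y₁ + y₂ + ∫ u in zmin..zmax, y₃ u) ^ 2|
      ≤ (3 / (y₁ + y₂ + ∫ u in zmin..zmax, y₃ u))
        * (|x₁ - y₁| + |x₂ - y₂| + ∫ u in zmin..zmax, |x₃ u - y₃ u|) := by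
  have hle : zmin ≤ zmax := hzz.le
  set Ix := ∫ u in zmin..zmax, x₃ u with hIxdef
  set Iy := ∫ u in zmin..zmax, y₃ u with hIydef
  set J := ∫ u in zmin..zmax, |x₃ u - y₃ u| with hJdef
  have huIcc : uIcc zmin zmax = Icc zmin zmax := uIcc_of_le hle
  have hx₃ii : IntervalIntegrable x₃ volume zmin zmax := by
    rw [intervalIntegrable_iff_integrableOn_Ioc_of_le hle]
    exact hx₃i.mono_set Ioc_subset_Icc_self
  have hy₃ii : IntervalIntegrable y₃ volume zmin zmax := by
    rw [intervalIntegrable_iff_integrableOn_Ioc_of_le hle]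
    exact hy₃i.mono_set Ioc_subset_Icc_self
  have hIx : 0 ≤ Ix := intervalIntegral.integral_nonneg hle (fun u hu => hx₃ u hu)
  have hIy : 0 ≤ Iy := intervalIntegral.integral_nonneg hle (fun u hu => hy₃ u hu)
  have hJ0 : 0 ≤ J := intervalIntegral.integral_nonneg hle (fun u _ => abs_nonneg _)
  have hIdiff : |Ix - Iy| ≤ J := by
    have : Ix - Iy = ∫ u in zmin..zmax, (x₃ u - y₃ u) :=
      (intervalIntegral.integral_sub hx₃ii hy₃ii).symm
    rw [this]
    exact intervalIntegral.abs_integral_le_integral_abs hle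
  set X := x₁ + x₂ + Ix
  set Y := y₁ + y₂ + Iy
  have hXY : |X - Y| ≤ |x₁ - y₁| + |x₂ - y₂| + J := by
    calc |X - Y| = |(x₁ - y₁) + (x₂ - y₂) + (Ix - Iy)| := by congr 1; simp only [X, Y]; ring
    _ ≤ |x₁ - y₁| + |x₂ - y₂| + |Ix - Iy| := by
        exact (abs_add_le _ _).trans (by gcongr; exact abs_add_le _ _)
    _ ≤ |x₁ - y₁| + |x₂ - y₂| + J := by linarith
  have hkey := alg_key x₁ x₂ y₁ y₂ X Y hxhat hyhat hx₁ hx₂ hy₁ hy₂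
    (by simp only [X]; linarith) (by simp only [X]; linarith)
    (by simp only [Y]; linarith) (by simp only [Y]; linarith)
  calc |x₁ * x₂ / X ^ 2 - y₁ * y₂ / Y ^ 2|
      ≤ (2 * |X - Y| + |x₁ - y₁| + |x₂ - y₂|) / Y := hkey
    _ ≤ (3 * (|x₁ - y₁| + |x₂ - y₂| + J)) / Y := by
        gcongr
        linarith [abs_nonneg (X - Y)]
    _ = (3 / Y) * (|x₁ - y₁| + |x₂ - y₂| + J) := by ring
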